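/- arXiv:1411.5557 — 4 statements merged into one kernel-verified Lean document; each statement's English description precedes it below -/
import Mathlib

section
/- Let C be a poset. If for every infinite sequence (x_i)_{i∈ℕ} in C there exist i < j with x_j ≤ x_i, then every strictly ascending chain of sieves in C is finite; equivalently, there is no strictly increasing sequence of sieves (D_n)_{n∈ℕ} in C. -/
open Set

/-- If for every infinite sequence `(x i)` in a poset `C` there are `i < j` with
`x j ≤ x i`, then there is no strictly increasing sequence of sieves (lower sets)
in `C`. -/
theorem no_strict_chain_of_sieves {C : Type*} [PartialOrder C]
    (h : ∀ x : ℕ → C, ∃ i j, i < j ∧ x j ≤ x i) :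
    ¬ ∃ D : ℕ → LowerSet C, ∀ n, D n < D (n + 1) := by
  rintro ⟨D, hD⟩
  have hmono : ∀ m n, m ≤ n → D m ≤ D n := fun m n hmn =>
    (monotone_nat_of_le_succ (fun k => (hD k).le)) hmn
  have hex : ∀ n, ∃ x, x ∈ D (n + 1) ∧ x ∉ D n := by
    intro n
    obtain ⟨x, hx1, hx2⟩ := Set.exists_of_ssubset (show (D n : Set C) ⊂ D (n + 1) from hD n)
    exact ⟨x, hx1, hx2⟩
  choose x hx1 hx2 using hex
  obtain ⟨i, j, hij, hle⟩ := h x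
  exact hx2 j (hmono (i + 1) j hij ((D (i + 1)).lower hle (hx1 i)))
end

section
/- Let C be an essentially small category and x ∈ C. The functor C(-,x) : C^op → Set is noetherian (every ascending chain of subfunctors stabilises) if and only if the poset C̄(x) is strongly noetherian. -/
open CategoryTheory CategoryTheory.Limits Opposite

universe v

variable {C : Type v} [SmallCategory C]

/-- The disjoint union `C(x) = ⨆ₜ C(t, x)` of all hom-sets into `x`. -/
def HomOver (x : C) : Type v := Σ t : C, t ⟶ x

/-- `⟨f⟩`: the set of morphisms in `C(x)` factoring through `f`. -/
def factorSet {x : C} (f : HomOver x) : Set (HomOver x) :=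
  {g | ∃ e : g.1 ⟶ f.1, g.2 = e ≫ f.2}

/-- The preorder on `C(x)`: `f ≤ g` iff `⟨f⟩ ⊆ ⟨g⟩`. -/
instance homOverPreorder (x : C) : Preorder (HomOver x) where
  le f g := factorSet f ⊆ factorSet g
  le_refl _ := subset_rfl
  le_trans _ _ _ h h' := Set.Subset.trans h h'

/-- The poset `C̄(x)`, obtained from the preorder on `C(x)` by identifying `f` and `g`
whenever `⟨f⟩ = ⟨g⟩`. -/
def HomPoset (x : C) := Antisymmetrization (HomOver x) (· ≤ ·)

instance (x : C) : PartialOrder (HomPoset x) :=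
  instPartialOrderAntisymmetrization

/-! ### Auxiliary lemmas -/

lemma homOver_le_iff {x : C} {f g : HomOver x} :
    f ≤ g ↔ ∃ e : f.1 ⟶ g.1, f.2 = e ≫ g.2 := by
  constructor
  · intro h
    exact h ⟨𝟙 f.1, (Category.id_comp _).symm⟩
  · rintro ⟨e, he⟩ h ⟨e', he'⟩
    exact ⟨e' ≫ e, by rw [he', he, Category.assoc]⟩

/-- Lower sets of the preorder `C(x)` are the same as sieves on `x`. -/
def lowerSetSieveIso (x : C) : LowerSet (HomOver x) ≃o Sieve x where
  toFun D :=
    { arrows := fun Y g => (⟨Y, g⟩ : HomOver x) ∈ D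
      downward_closed := fun {Y Z f} hf g =>
        D.lower (homOver_le_iff.mpr ⟨g, rfl⟩) hf }
  invFun S :=
    ⟨{f | S.arrows f.2}, by
      intro a b hba ha
      obtain ⟨e, he⟩ := homOver_le_iff.mp hba
      show S.arrows b.2
      rw [he]
      exact S.downward_closed ha e⟩
  left_inv D := by
    ext f
    rfl
  right_inv S := by
    ext Y g
    rfl
  map_rel_iff' := by
    intro D E
    constructor
    · intro h f hf
      exact h f.2 hf
    · intro h Y g hg
      exact h hg

/-- The quotient map `C(x) → C̄(x)`. -/
def toHP (x : C) : HomOver x → HomPoset x := toAntisymmetrization (· ≤ ·)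

/-- A choice of representative `C̄(x) → C(x)`. -/
noncomputable def ofHP (x : C) : HomPoset x → HomOver x := ofAntisymmetrization (· ≤ ·)

lemma toHP_ofHP (x : C) (b : HomPoset x) : toHP x (ofHP x b) = b :=
  toAntisymmetrization_ofAntisymmetrization _ _

lemma toHP_mono (x : C) : Monotone (toHP x) := fun _ _ h => toAntisymmetrization_mono h

lemma toHP_exact {x : C} {a b : HomOver x} (h : toHP x a = toHP x b) : a ≤ b ∧ b ≤ a :=
  Quotient.exact' h

lemma toHP_le_iff {x : C} {a b : HomOver x} : toHP x a ≤ toHP x b ↔ a ≤ b := Iff.rfl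

/-- Lower sets of the preorder `C(x)` are the same as lower sets of its
antisymmetrization `C̄(x)`. -/
noncomputable def lowerSetAntisymmIso (x : C) :
    LowerSet (HomOver x) ≃o LowerSet (HomPoset x) where
  toFun D :=
    ⟨toHP x '' D, by
      rintro a' b' hba ⟨a, ha, rfl⟩
      refine ⟨ofHP x b', D.lower ?_ ha, toHP_ofHP x b'⟩
      rw [← toHP_le_iff, toHP_ofHP]
      exact hba⟩
  invFun E :=
    ⟨toHP x ⁻¹' E, fun a b hba ha => E.lower (toHP_mono x hba) ha⟩
  left_inv D := by
    ext a
    constructor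
    · rintro ⟨b, hb, hba⟩
      exact D.lower (toHP_exact hba).2 hb
    · intro ha
      exact ⟨a, ha, rfl⟩
  right_inv E := by
    ext a'
    constructor
    · rintro ⟨b, hb, rfl⟩
      exact hb
    · intro ha
      exact ⟨ofHP x a', by show toHP x (ofHP x a') ∈ E; rw [toHP_ofHP]; exact ha, toHP_ofHP x a'⟩
  map_rel_iff' := by
    intro D E
    constructor
    · intro h a ha
      obtain ⟨b, hb, hba⟩ := h ⟨a, ha, rfl⟩
      exact E.lower (toHP_exact hba).2 hb
    · intro h
      exact Set.image_mono h

/-- Subobjects of `yoneda.obj x` are the same as sieves on `x`. -/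
noncomputable def subobjectSieveIso (x : C) :
    Subobject (yoneda.obj x) ≃o Sieve x where
  toFun P := Sieve.sieveOfSubfunctor P.arrow
  invFun S := Subobject.mk S.functorInclusion
  left_inv P := by
    show Subobject.mk (Sieve.sieveOfSubfunctor P.arrow).functorInclusion = P
    have hinj : ∀ U, Function.Injective (P.arrow.app U) := fun U =>
      (mono_iff_injective _).mp ((NatTrans.mono_iff_mono_app _).mp inferInstance U)
    let φ : (P : Cᵒᵖ ⥤ Type v) ⟶ (Sieve.sieveOfSubfunctor P.arrow).functor :=
      { app := fun U => TypeCat.ofHom fun s => ⟨P.arrow.app U s, s, rfl⟩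
        naturality := fun U V f => by
          refine ConcreteCategory.hom_ext _ _ fun s => ?_
          apply Subtype.ext
          exact (NatTrans.naturality_apply P.arrow f s) }
    have : ∀ U, IsIso (φ.app U) := by
      intro U
      rw [isIso_iff_bijective]
      constructor
      · intro s s' hss
        exact hinj U (congrArg Subtype.val hss)
      · rintro ⟨g, t, ht⟩
        exact ⟨t, Subtype.ext ht⟩
    have : IsIso φ := NatIso.isIso_of_isIso_app φ
    have h := Subobject.mk_eq_mk_of_comm P.arrow
      (Sieve.sieveOfSubfunctor P.arrow).functorInclusion (asIso φ) rfl
    rw [← h, Subobject.mk_arrow]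
  right_inv S := by
    show Sieve.sieveOfSubfunctor (Subobject.mk S.functorInclusion).arrow = S
    let i := Subobject.underlyingIso S.functorInclusion
    have h1 : ∀ (U) (t), S.functorInclusion.app U (i.hom.app U t) =
        (Subobject.mk S.functorInclusion).arrow.app U t := fun U t =>
      ConcreteCategory.congr_hom (NatTrans.congr_app
        (Subobject.underlyingIso_hom_comp_eq_mk S.functorInclusion) U) t
    have h2 : ∀ (U) (s), (Subobject.mk S.functorInclusion).arrow.app U (i.inv.app U s) =
        S.functorInclusion.app U s := fun U s =>
      ConcreteCategory.congr_hom (NatTrans.congr_app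
        (Subobject.underlyingIso_arrow S.functorInclusion) U) s
    have : Sieve.sieveOfSubfunctor (Subobject.mk S.functorInclusion).arrow =
        Sieve.sieveOfSubfunctor S.functorInclusion := by
      ext Y g
      constructor
      · rintro ⟨t, ht⟩
        exact ⟨i.hom.app (op Y) t, by rw [h1]; exact ht⟩
      · rintro ⟨t, ht⟩
        exact ⟨i.inv.app (op Y) t, by rw [h2]; exact ht⟩
    rw [this, Sieve.sieveOfSubfunctor_functorInclusion]
  map_rel_iff' := by
    intro P Q
    constructor
    · intro h
      have hQinj : ∀ U, Function.Injective (Q.arrow.app U) := fun U =>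
        (mono_iff_injective _).mp ((NatTrans.mono_iff_mono_app _).mp inferInstance U)
      have spec : ∀ (U : Cᵒᵖ) (s : (P : Cᵒᵖ ⥤ Type v).obj U),
          Q.arrow.app U ((h (P.arrow.app U s) ⟨s, rfl⟩).choose) = P.arrow.app U s :=
        fun U s => (h (P.arrow.app U s) ⟨s, rfl⟩).choose_spec
      let ψ : (P : Cᵒᵖ ⥤ Type v) ⟶ (Q : Cᵒᵖ ⥤ Type v) :=
        { app := fun U => TypeCat.ofHom fun s => (h (P.arrow.app U s) ⟨s, rfl⟩).choose
          naturality := fun U V f => by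
            refine ConcreteCategory.hom_ext _ _ fun s => ?_
            apply hQinj V
            simp only [types_comp_apply, TypeCat.ofHom_apply]
            rw [spec, NatTrans.naturality_apply Q.arrow f, spec]
            exact NatTrans.naturality_apply P.arrow f s }
      refine Subobject.le_of_comm ψ ?_
      ext U s
      exact spec U s
    · intro h Y g
      rintro ⟨t, ht⟩
      refine ⟨(Subobject.ofLE P Q h).app (op Y) t, ?_⟩
      rw [← ht]
      exact ConcreteCategory.congr_hom (NatTrans.congr_app (Subobject.ofLE_arrow h) (op Y)) t

lemma chain_stab_of_orderIso {α β : Type*} [Preorder α] [Preorder β] (e : α ≃o β)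
    (h : ∀ g : ℕ →o β, ∃ n, ∀ m, n ≤ m → g m = g n) :
    ∀ f : ℕ →o α, ∃ n, ∀ m, n ≤ m → f m = f n := by
  intro f
  obtain ⟨n, hn⟩ := h ⟨fun n => e (f n), fun a b hab => e.monotone (f.mono hab)⟩
  exact ⟨n, fun m hm => e.injective (hn m hm)⟩

/-- The representable functor `C(-, x) : Cᵒᵖ → Set` is noetherian (every ascending
chain of subfunctors stabilises) iff the poset `C̄(x)` is strongly noetherian (every
ascending chain of sieves, i.e. lower sets, stabilises). -/
theorem yoneda_noetherian_iff (x : C) :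
    (∀ f : ℕ →o Subobject (yoneda.obj x), ∃ n, ∀ m, n ≤ m → f m = f n) ↔
      (∀ D : ℕ →o LowerSet (HomPoset x), ∃ n, ∀ m, n ≤ m → D m = D n) := by
  have e : Subobject (yoneda.obj x) ≃o LowerSet (HomPoset x) :=
    (subobjectSieveIso x).trans ((lowerSetSieveIso x).symm.trans (lowerSetAntisymmIso x))
  exact ⟨fun h => chain_stab_of_orderIso e.symm h, fun h => chain_stab_of_orderIso e h⟩
end

section
/- Let φ : C → D be a contravariantly finite functor between essentially small categories, A a Grothendieck abelian category, and M ∈ A. If M[C(-,x)] is a noetherian object of Fun(C^op, A) for every x ∈ C, then M[D(-,y)] is a noetherian object of Fun(D^op, A) for every y ∈ D. -/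
open CategoryTheory CategoryTheory.Limits Opposite

universe v u

/-- `F ⇝ G`: the functors `F, G : Cᵒᵖ → Set` are connected by a finite chain of
epimorphisms `Fᵢ ↠ Fᵢ₊₁` and monomorphisms `Fᵢ₊₁ ↣ Fᵢ`. -/
inductive Leadsto {C : Type v} [SmallCategory C] :
    (Cᵒᵖ ⥤ Type v) → (Cᵒᵖ ⥤ Type v) → Prop
  | refl (F : Cᵒᵖ ⥤ Type v) : Leadsto F F
  | epi {F G H : Cᵒᵖ ⥤ Type v} (f : F ⟶ G) : Epi f → Leadsto G H → Leadsto F H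
  | mono {F G H : Cᵒᵖ ⥤ Type v} (f : G ⟶ F) : Mono f → Leadsto G H → Leadsto F H

/-- A functor `φ : C → D` is contravariantly finite if every object of `D` is
isomorphic to some `φ x`, and for every `y ∈ D` there are `x₁, …, xₙ ∈ C` with
`⨆ᵢ C(-, xᵢ) ⇝ D(φ-, y)`. -/
def ContravariantlyFinite {C D : Type v} [SmallCategory C] [SmallCategory D]
    (φ : C ⥤ D) : Prop :=
  (∀ y : D, ∃ x : C, Nonempty (φ.obj x ≅ y)) ∧
    ∀ y : D, ∃ (n : ℕ) (xs : Fin n → C),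
      Leadsto (∐ fun i : Fin n => yoneda.obj (xs i)) (φ.op ⋙ yoneda.obj y)

variable {C D : Type v} [SmallCategory C] [SmallCategory D]
  {A : Type u} [Category.{v} A]

/-- `M[C(-,x)]`: the functor sending `t` to the coproduct of copies of `M` indexed by
the hom-set `C(t, x)`. -/
@[simps]
noncomputable def freeFunctor [HasCoproducts.{v} A] (M : A) (x : C) : Cᵒᵖ ⥤ A where
  obj t := ∐ (fun _ : t.unop ⟶ x => M)
  map {t t'} e := Sigma.desc fun f => Sigma.ι (fun _ : t'.unop ⟶ x => M) (e.unop ≫ f)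
  map_id t := by ext f; simp
  map_comp {t t' t''} e e' := by ext f; simp

/-- An object is noetherian if its subobjects satisfy the ascending chain condition. -/
def IsNoetherianObject {B : Type*} [Category B] (N : B) : Prop :=
  ∀ f : ℕ →o Subobject N, ∃ n, ∀ m, n ≤ m → f m = f n

/-! ### Auxiliary lemmas -/

section TransferLemmas

universe v₁ v₂ u₁ u₂

/-- Noetherianity transfers along a monotone, order-reflecting map of subobject posets. -/
theorem isNoetherianObject_of_orderHom {B₁ : Type u₁} [Category.{v₁} B₁]
    {B₂ : Type u₂} [Category.{v₂} B₂] {X : B₁} {Y : B₂}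
    (g : Subobject X →o Subobject Y)
    (hg : ∀ {S T : Subobject X}, g S ≤ g T → S ≤ T)
    (hY : _root_.IsNoetherianObject Y) : _root_.IsNoetherianObject X := by
  intro f
  obtain ⟨n, hn⟩ := hY (g.comp f)
  exact ⟨n, fun m hm => le_antisymm (hg (le_of_eq (hn m hm))) (f.monotone hm)⟩

/-- A subobject of a noetherian object is noetherian. -/
theorem isNoetherianObject_of_mono {B : Type u₁} [Category.{v₁} B] {X Y : B}
    (i : X ⟶ Y) [Mono i] (hY : _root_.IsNoetherianObject Y) : _root_.IsNoetherianObject X := by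
  refine isNoetherianObject_of_orderHom
    ⟨fun S => Subobject.mk (S.arrow ≫ i), fun S T h => ?_⟩ (fun {S T} h => ?_) hY
  · exact Subobject.mk_le_mk_of_comm (Subobject.ofLE S T h)
      (by rw [← Category.assoc, Subobject.ofLE_arrow])
  · refine Subobject.le_of_comm (Subobject.ofMkLEMk _ _ h) ?_
    have h2 := Subobject.ofMkLEMk_comp h
    rw [← Category.assoc] at h2
    exact (cancel_mono i).1 h2

/-- A quotient of a noetherian object is noetherian (in an abelian category). -/
theorem isNoetherianObject_of_epi {B : Type u₁} [Category.{v₁} B] [Abelian B] {X Y : B}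
    (e : X ⟶ Y) [Epi e] (hX : _root_.IsNoetherianObject X) : _root_.IsNoetherianObject Y := by
  refine isNoetherianObject_of_orderHom
    ⟨fun S => Subobject.mk (pullback.snd S.arrow e), fun S T h => ?_⟩ (fun {S T} h => ?_) hX
  · refine Subobject.mk_le_mk_of_comm
      (pullback.lift (pullback.fst _ _ ≫ Subobject.ofLE S T h) (pullback.snd _ _) ?_) ?_
    · rw [Category.assoc, Subobject.ofLE_arrow, pullback.condition]
    · exact pullback.lift_snd _ _ _
  · have hw2 : Subobject.ofMkLEMk _ _ h ≫ pullback.snd T.arrow e = pullback.snd S.arrow e :=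
      Subobject.ofMkLEMk_comp h
    have h0 : pullback.fst S.arrow e ≫ S.arrow ≫ cokernel.π T.arrow = 0 := by
      calc pullback.fst S.arrow e ≫ S.arrow ≫ cokernel.π T.arrow
          = (pullback.fst S.arrow e ≫ S.arrow) ≫ cokernel.π T.arrow := by
            rw [Category.assoc]
        _ = (pullback.snd S.arrow e ≫ e) ≫ cokernel.π T.arrow := by rw [pullback.condition]
        _ = ((Subobject.ofMkLEMk _ _ h ≫ pullback.snd T.arrow e) ≫ e) ≫ cokernel.π T.arrow := by
            rw [hw2]
        _ = Subobject.ofMkLEMk _ _ h ≫ pullback.fst T.arrow e ≫ T.arrow ≫ cokernel.π T.arrow := by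
            simp only [Category.assoc]; rw [← pullback.condition_assoc]
        _ = 0 := by simp
    have h0' : S.arrow ≫ cokernel.π T.arrow = 0 :=
      (cancel_epi (pullback.fst S.arrow e)).1 (by rw [comp_zero]; exact h0)
    exact Subobject.le_of_comm (Abelian.monoLift T.arrow S.arrow h0')
      (Abelian.monoLift_comp _ _ _)

end TransferLemmas

section Biprod

universe v₁ u₁

open CategoryTheory.Abelian

attribute [local instance] Pseudoelement.objectToSort Pseudoelement.homToFun

/-- Key lemma: two nested subobjects of a biproduct with the same pullback along `inl`
and the same image under `snd` coincide. -/
theorem subobject_biprod_eq {B : Type u₁} [Category.{v₁} B] [Abelian B] {X Y : B}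
    {S T : Subobject (X ⊞ Y)} (hST : S ≤ T)
    (h1 : Subobject.mk (pullback.snd S.arrow (biprod.inl : X ⟶ X ⊞ Y))
        = Subobject.mk (pullback.snd T.arrow (biprod.inl : X ⟶ X ⊞ Y)))
    (h2 : imageSubobject (S.arrow ≫ (biprod.snd : X ⊞ Y ⟶ Y))
        = imageSubobject (T.arrow ≫ (biprod.snd : X ⊞ Y ⟶ Y))) :
    S = T := by
  have hu : Subobject.ofLE S T hST ≫ T.arrow = S.arrow := Subobject.ofLE_arrow hST
  suffices hepi : Epi (Subobject.ofLE S T hST) by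
    haveI : Mono (Subobject.ofLE S T hST ≫ T.arrow) := by rw [hu]; infer_instance
    haveI : Mono (Subobject.ofLE S T hST) := mono_of_mono (Subobject.ofLE S T hST) T.arrow
    haveI : IsIso (Subobject.ofLE S T hST) := isIso_of_mono_of_epi _
    refine le_antisymm hST (Subobject.le_of_comm (inv (Subobject.ofLE S T hST)) ?_)
    rw [IsIso.inv_comp_eq, hu]
  refine Pseudoelement.epi_of_pseudo_surjective _ fun τ => ?_
  -- Step 1: find `σ₀` in `S` with the same image in `Y` as `τ`.
  have hw2 : (factorThruImageSubobject (T.arrow ≫ biprod.snd)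
        ≫ Subobject.ofLE _ _ h2.ge) ≫ (imageSubobject (S.arrow ≫ biprod.snd)).arrow
      = T.arrow ≫ biprod.snd := by
    rw [Category.assoc, Subobject.ofLE_arrow, imageSubobject_arrow_comp]
  obtain ⟨σ₀, hσ₀⟩ := Pseudoelement.pseudo_surjective_of_epi
    (factorThruImageSubobject (S.arrow ≫ biprod.snd))
    ((factorThruImageSubobject (T.arrow ≫ biprod.snd) ≫ Subobject.ofLE _ _ h2.ge) τ)
  have step1 : (S.arrow ≫ biprod.snd) σ₀ = (T.arrow ≫ biprod.snd) τ := by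
    rw [← imageSubobject_arrow_comp (S.arrow ≫ biprod.snd), Pseudoelement.comp_apply, hσ₀,
      ← Pseudoelement.comp_apply, hw2]
  -- The "difference" z of `T.arrow τ` and `S.arrow σ₀`.
  have hsnd : Pseudoelement.pseudoApply (biprod.snd : X ⊞ Y ⟶ Y)
        (Pseudoelement.pseudoApply T.arrow τ)
      = Pseudoelement.pseudoApply (biprod.snd : X ⊞ Y ⟶ Y)
        (Pseudoelement.pseudoApply S.arrow σ₀) := by
    rw [← Pseudoelement.comp_apply, ← Pseudoelement.comp_apply]
    exact step1.symm
  obtain ⟨z, hz0, hz⟩ := Pseudoelement.sub_of_eq_image (biprod.snd : X ⊞ Y ⟶ Y)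
    (Pseudoelement.pseudoApply T.arrow τ) (Pseudoelement.pseudoApply S.arrow σ₀) hsnd
  have hyS : ∀ {W : B} (g : X ⊞ Y ⟶ W), S.arrow ≫ g = 0 →
      Pseudoelement.pseudoApply g (Pseudoelement.pseudoApply S.arrow σ₀) = 0 := by
    intro W g hg
    rw [← Pseudoelement.comp_apply, hg]
    exact Pseudoelement.zero_apply _ _
  -- Step 2: z lies in T.
  have hπT : Pseudoelement.pseudoApply (cokernel.π T.arrow) z = 0 := by
    have hy : Pseudoelement.pseudoApply (cokernel.π T.arrow)
        (Pseudoelement.pseudoApply S.arrow σ₀) = 0 :=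
      hyS _ (by rw [← hu, Category.assoc, cokernel.condition, comp_zero])
    rw [hz _ _ hy, ← Pseudoelement.comp_apply, cokernel.condition]
    exact Pseudoelement.zero_apply _ _
  obtain ⟨ζ, hζ⟩ := Pseudoelement.pseudo_exact_of_exact
    (ShortComplex.exact_cokernel T.arrow) z hπT
  -- Step 3: z lies in X.
  obtain ⟨ξ, hξ⟩ := Pseudoelement.pseudo_exact_of_exact
    ((ShortComplex.Splitting.ofHasBinaryBiproduct X Y).exact) z hz0
  -- Step 4: hence z lies in the pullback of T along inl, which equals that of S, so z ∈ S.
  obtain ⟨ρ, hρ1, hρ2⟩ := Pseudoelement.pseudo_pullback (f := T.arrow)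
    (g := (biprod.inl : X ⟶ X ⊞ Y)) (p := ζ) (q := ξ) (by rw [hζ, hξ])
  have hwsnd : Subobject.ofMkLEMk _ _ h1.ge ≫ pullback.snd S.arrow (biprod.inl : X ⟶ X ⊞ Y)
      = pullback.snd T.arrow (biprod.inl : X ⟶ X ⊞ Y) := Subobject.ofMkLEMk_comp h1.ge
  have hmid : Pseudoelement.pseudoApply (pullback.snd S.arrow (biprod.inl : X ⟶ X ⊞ Y))
      (Pseudoelement.pseudoApply (Subobject.ofMkLEMk _ _ h1.ge) ρ) = ξ := by
    rw [← Pseudoelement.comp_apply, hwsnd, hρ2]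
  have hσ₁ : Pseudoelement.pseudoApply S.arrow
      (Pseudoelement.pseudoApply (pullback.fst S.arrow (biprod.inl : X ⟶ X ⊞ Y))
        (Pseudoelement.pseudoApply (Subobject.ofMkLEMk _ _ h1.ge) ρ)) = z := by
    rw [← Pseudoelement.comp_apply, pullback.condition, Pseudoelement.comp_apply, hmid, hξ]
  -- Step 5: conclude that `T.arrow τ` lies in S.
  have hπS : Pseudoelement.pseudoApply (cokernel.π S.arrow)
      (Pseudoelement.pseudoApply T.arrow τ) = 0 := by
    have hy : Pseudoelement.pseudoApply (cokernel.π S.arrow)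
        (Pseudoelement.pseudoApply S.arrow σ₀) = 0 := hyS _ (cokernel.condition _)
    have hzS : Pseudoelement.pseudoApply (cokernel.π S.arrow) z = 0 := by
      rw [← hσ₁, ← Pseudoelement.comp_apply, cokernel.condition]
      exact Pseudoelement.zero_apply _ _
    rw [← hz _ _ hy]
    exact hzS
  obtain ⟨σ, hσ⟩ := Pseudoelement.pseudo_exact_of_exact
    (ShortComplex.exact_cokernel S.arrow) _ hπS
  refine ⟨σ, Pseudoelement.pseudo_injective_of_mono T.arrow ?_⟩
  rw [← Pseudoelement.comp_apply, hu, hσ]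

/-- A biproduct of two noetherian objects is noetherian. -/
theorem isNoetherianObject_biprod {B : Type u₁} [Category.{v₁} B] [Abelian B] {X Y : B}
    (hX : _root_.IsNoetherianObject X) (hY : _root_.IsNoetherianObject Y) :
    _root_.IsNoetherianObject (X ⊞ Y) := by
  intro f
  have amono : Monotone (fun n =>
      Subobject.mk (pullback.snd (f n).arrow (biprod.inl : X ⟶ X ⊞ Y))) := by
    intro p q hpq
    dsimp only
    exact Subobject.mk_le_mk_of_comm
      (pullback.lift (pullback.fst _ _ ≫ Subobject.ofLE _ _ (f.monotone hpq))
        (pullback.snd _ _)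
        (by rw [Category.assoc, Subobject.ofLE_arrow, pullback.condition])) (pullback.lift_snd _ _ _)
  have bmono : Monotone (fun n => imageSubobject ((f n).arrow ≫ (biprod.snd : X ⊞ Y ⟶ Y))) := by
    intro p q hpq
    have heq : (f p).arrow ≫ (biprod.snd : X ⊞ Y ⟶ Y)
        = Subobject.ofLE _ _ (f.monotone hpq) ≫ ((f q).arrow ≫ biprod.snd) := by
      rw [← Category.assoc, Subobject.ofLE_arrow]
    dsimp only
    rw [heq]
    exact imageSubobject_comp_le _ _
  obtain ⟨n₁, hn₁⟩ := hX ⟨_, amono⟩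
  obtain ⟨n₂, hn₂⟩ := hY ⟨_, bmono⟩
  refine ⟨max n₁ n₂, fun m hm => ?_⟩
  have hSm : f (max n₁ n₂) ≤ f m := f.monotone hm
  refine (subobject_biprod_eq hSm ?_ ?_).symm
  · exact (hn₁ (max n₁ n₂) (le_max_left _ _)).trans
      (hn₁ m ((le_max_left _ _).trans hm)).symm
  · exact (hn₂ (max n₁ n₂) (le_max_right _ _)).trans
      (hn₂ m ((le_max_right _ _).trans hm)).symm

/-- A finite coproduct of noetherian objects is noetherian. -/
theorem isNoetherianObject_coprod {B : Type u₁} [Category.{v₁} B] [Abelian B]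
    (n : ℕ) (g : Fin n → B) (hg : ∀ i, _root_.IsNoetherianObject (g i)) :
    _root_.IsNoetherianObject (∐ g) := by
  induction n with
  | zero =>
    have hz : IsZero (∐ g) := by
      rw [IsZero.iff_id_eq_zero]
      apply colimit.hom_ext
      rintro ⟨i⟩
      exact i.elim0
    intro f
    exact ⟨0, fun m _ => le_antisymm
      (Subobject.le_of_comm 0 (hz.eq_of_tgt _ _))
      (Subobject.le_of_comm 0 (hz.eq_of_tgt _ _))⟩
  | succ n ih =>
    have hW : _root_.IsNoetherianObject (g 0 ⊞ (∐ fun i : Fin n => g i.succ)) :=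
      isNoetherianObject_biprod (hg 0) (ih _ fun i => hg i.succ)
    haveI hepi : Epi (biprod.desc (Sigma.ι g 0) (Sigma.desc fun i : Fin n => Sigma.ι g i.succ)) := by
      refine ⟨fun {Z} φ ψ hφψ => ?_⟩
      apply colimit.hom_ext
      rintro ⟨j⟩
      induction j using Fin.cases with
      | zero =>
        have h0 := congrArg (fun q => biprod.inl ≫ q) hφψ
        simpa using h0
      | succ i =>
        have hi := congrArg
          (fun q => Sigma.ι (fun i : Fin n => g i.succ) i ≫ biprod.inr ≫ q) hφψ
        simpa using hi
    exact isNoetherianObject_of_epi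
      (biprod.desc (Sigma.ι g 0) (Sigma.desc fun i : Fin n => Sigma.ι g i.succ)) hW

end Biprod

/-! ### The functor `M[F]` -/

/-- `M[F]`, the coproduct of copies of `M` indexed pointwise by the presheaf `F`. -/
@[simps]
noncomputable def mf [HasCoproducts.{v} A] (M : A) (F : Cᵒᵖ ⥤ Type v) : Cᵒᵖ ⥤ A where
  obj t := ∐ (fun _ : F.obj t => M)
  map {t t'} e := Sigma.desc fun f => Sigma.ι (fun _ : F.obj t' => M) (F.map e f)
  map_id t := by ext f; simp
  map_comp {t t' t''} e e' := by ext f; simp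

theorem freeFunctor_eq_mf [HasCoproducts.{v} A] (M : A) (x : C) :
    freeFunctor M x = mf M (yoneda.obj x) := rfl

/-- `M[-]` is functorial in the presheaf. -/
@[simps]
noncomputable def mfMap [HasCoproducts.{v} A] (M : A) {F G : Cᵒᵖ ⥤ Type v} (α : F ⟶ G) :
    mf M F ⟶ mf M G where
  app t := Sigma.desc fun f => Sigma.ι (fun _ : G.obj t => M) (α.app t f)
  naturality {t t'} e := by
    dsimp only [mf]
    ext f
    simp only [colimit.ι_desc_assoc, Cofan.mk_pt, Cofan.mk_ι_app, colimit.ι_desc]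
    rw [FunctorToTypes.naturality]

theorem mfMap_epi [HasCoproducts.{v} A] (M : A) {F G : Cᵒᵖ ⥤ Type v} (α : F ⟶ G) [Epi α] :
    Epi (mfMap M α) := by
  have hsurj : ∀ t, Function.Surjective (α.app t) := fun t =>
    (epi_iff_surjective _).1 inferInstance
  have happ : ∀ t, Epi ((mfMap M α).app t) := by
    intro t
    refine ⟨fun {Z} φ ψ hφψ => ?_⟩
    apply colimit.hom_ext
    rintro ⟨g⟩
    obtain ⟨f, rfl⟩ := hsurj t g
    have h' := congrArg (fun q => Sigma.ι (fun _ : F.obj t => M) f ≫ q) hφψ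
    simp only [mfMap_app] at h'
    erw [Sigma.ι_desc_assoc, Sigma.ι_desc_assoc] at h'
    exact h'
  exact NatTrans.epi_of_epi_app _

theorem mfMap_mono [HasCoproducts.{v} A] [HasZeroMorphisms A] (M : A)
    {F G : Cᵒᵖ ⥤ Type v} (α : F ⟶ G) [Mono α] : Mono (mfMap M α) := by
  classical
  have hinj : ∀ t, Function.Injective (α.app t) := fun t =>
    (mono_iff_injective _).1 inferInstance
  have happ : ∀ t, Mono ((mfMap M α).app t) := by
    intro t
    have hsplit : SplitMono ((mfMap M α).app t) :=
      { retraction := Sigma.desc fun g =>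
          if h : ∃ f, α.app t f = g then Sigma.ι (fun _ : F.obj t => M) h.choose else 0
        id := by
          apply colimit.hom_ext
          rintro ⟨f⟩
          have hex : ∃ f', α.app t f' = α.app t f := ⟨f, rfl⟩
          have hch : hex.choose = f := hinj t hex.choose_spec
          simp only [mfMap_app, colimit.ι_desc_assoc, Cofan.mk_pt, Cofan.mk_ι_app,
            colimit.ι_desc, Category.comp_id]
          erw [Sigma.ι_desc_assoc, Sigma.ι_desc]
          erw [dif_pos hex, hch]
          simp [mf]
      }
    haveI := IsSplitMono.mk' hsplit
    infer_instance
  exact NatTrans.mono_of_mono_app _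

section MfNoetherian

variable [Abelian A] [HasColimits A]

theorem leadsto_isNoetherianObject {M : A} {F G : Cᵒᵖ ⥤ Type v} (hFG : Leadsto F G) :
    _root_.IsNoetherianObject (mf M F) → _root_.IsNoetherianObject (mf M G) := by
  induction hFG with
  | refl F => exact id
  | epi f hf _ ih =>
    intro hF
    haveI := hf
    haveI := mfMap_epi M f
    exact ih (isNoetherianObject_of_epi (mfMap M f) hF)
  | mono f hf _ ih =>
    intro hF
    haveI := hf
    haveI := mfMap_mono M f
    exact ih (isNoetherianObject_of_mono (mfMap M f) hF)

theorem mf_coprod_epi (M : A) {n : ℕ} (xs : Fin n → C) :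
    ∃ c : (∐ fun i : Fin n => mf M (yoneda.obj (xs i)))
        ⟶ mf M (∐ fun i : Fin n => yoneda.obj (xs i)), Epi c := by
  refine ⟨Sigma.desc fun i => mfMap M (Sigma.ι (fun i => yoneda.obj (xs i)) i), ⟨?_⟩⟩
  intro Z φ ψ hφψ
  ext t : 2
  apply colimit.hom_ext
  rintro ⟨g⟩
  obtain ⟨⟨i⟩, y, hy⟩ := FunctorToTypes.jointly_surjective'
    (Discrete.functor fun i => yoneda.obj (xs i)) t g
  have h1 : mfMap M (Sigma.ι (fun i => yoneda.obj (xs i)) i) ≫ φ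
      = mfMap M (Sigma.ι (fun i => yoneda.obj (xs i)) i) ≫ ψ := by
    have h' := congrArg
      (fun q => Sigma.ι (fun i : Fin n => mf M (yoneda.obj (xs i))) i ≫ q) hφψ
    simpa using h'
  have h2 := NatTrans.congr_app h1 t
  have h3 := congrArg
    (fun q => Sigma.ι (fun _ : (yoneda.obj (xs i)).obj t => M) y ≫ q) h2
  simp only [NatTrans.comp_app, mfMap_app, colimit.ι_desc_assoc, Cofan.mk_pt,
    Cofan.mk_ι_app] at h3
  rw [hy]
  erw [Sigma.ι_desc_assoc, Sigma.ι_desc_assoc] at h3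
  exact h3

/-- Noetherianity descends along restriction by an essentially surjective functor. -/
theorem isNoetherianObject_of_comp_op (φ : C ⥤ D)
    (hes : ∀ y : D, ∃ x : C, Nonempty (φ.obj x ≅ y)) (N : Dᵒᵖ ⥤ A)
    (hN : _root_.IsNoetherianObject (φ.op ⋙ N)) : _root_.IsNoetherianObject N := by
  have hmono : ∀ {P : Dᵒᵖ ⥤ A} (m : P ⟶ N), Mono m → Mono (Functor.whiskerLeft φ.op m) := by
    intro P m hm
    haveI := hm
    haveI : ∀ c : Cᵒᵖ, Mono ((Functor.whiskerLeft φ.op m).app c) := fun c =>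
      inferInstanceAs (Mono (m.app (φ.op.obj c)))
    exact NatTrans.mono_of_mono_app _
  have inst : ∀ S : Subobject N, Mono (Functor.whiskerLeft φ.op S.arrow) := fun S =>
    hmono _ inferInstance
  have gmono : ∀ {S T : Subobject N}, S ≤ T →
      (@Subobject.mk _ _ _ _ (Functor.whiskerLeft φ.op S.arrow) (inst S)
        ≤ @Subobject.mk _ _ _ _ (Functor.whiskerLeft φ.op T.arrow) (inst T)) := by
    intro S T hST
    haveI := inst S; haveI := inst T
    exact Subobject.mk_le_mk_of_comm (Functor.whiskerLeft φ.op (Subobject.ofLE S T hST))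
      (by rw [← Functor.whiskerLeft_comp, Subobject.ofLE_arrow])
  refine isNoetherianObject_of_orderHom
    ⟨fun S => @Subobject.mk _ _ _ _ (Functor.whiskerLeft φ.op S.arrow) (inst S),
      fun S T h => gmono h⟩ (fun {S T} hST => ?_) hN
  haveI := inst S; haveI := inst T
  have hw : Subobject.ofMkLEMk _ _ hST ≫ Functor.whiskerLeft φ.op T.arrow
      = Functor.whiskerLeft φ.op S.arrow := Subobject.ofMkLEMk_comp hST
  -- construct the comparison map pointwise, using essential surjectivity
  have key : ∀ d : Dᵒᵖ, ∃ vd : (Subobject.underlying.obj S).obj d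
        ⟶ (Subobject.underlying.obj T).obj d,
      vd ≫ T.arrow.app d = S.arrow.app d := by
    intro d
    induction d using Opposite.rec with
    | op d₀ =>
      obtain ⟨x, ⟨e⟩⟩ := hes d₀
      have hw' : (Subobject.ofMkLEMk _ _ hST).app (op x) ≫ T.arrow.app (op (φ.obj x))
          = S.arrow.app (op (φ.obj x)) := by
        have h' := NatTrans.congr_app hw (op x)
        simp only [NatTrans.comp_app, Functor.whiskerLeft_app, Functor.op_obj, unop_op] at h'
        exact h'
      have hw'' := reassoc_of% hw'
      refine ⟨(Subobject.underlying.obj S).map e.op.hom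
        ≫ (Subobject.ofMkLEMk _ _ hST).app (op x)
        ≫ (Subobject.underlying.obj T).map e.op.inv, ?_⟩
      rw [Category.assoc, Category.assoc]
      rw [NatTrans.naturality]
      simp only [Functor.op_obj, unop_op]
      rw [hw'']
      rw [NatTrans.naturality_assoc]
      rw [← Functor.map_comp, Iso.hom_inv_id, CategoryTheory.Functor.map_id,
        Category.comp_id]
  choose vv hvv using key
  have hnatv : ∀ {d d' : Dᵒᵖ} (gdd : d ⟶ d'),
      (Subobject.underlying.obj S).map gdd ≫ vv d'
        = vv d ≫ (Subobject.underlying.obj T).map gdd := by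
    intro d d' gdd
    haveI : Mono (T.arrow.app d') := inferInstance
    rw [← cancel_mono (T.arrow.app d')]
    calc ((Subobject.underlying.obj S).map gdd ≫ vv d') ≫ T.arrow.app d'
        = (Subobject.underlying.obj S).map gdd ≫ (vv d' ≫ T.arrow.app d') := by
          rw [Category.assoc]
      _ = (Subobject.underlying.obj S).map gdd ≫ S.arrow.app d' := by rw [hvv]
      _ = S.arrow.app d ≫ N.map gdd := by rw [NatTrans.naturality]
      _ = (vv d ≫ T.arrow.app d) ≫ N.map gdd := by rw [hvv]
      _ = vv d ≫ ((Subobject.underlying.obj T).map gdd ≫ T.arrow.app d') := by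
          rw [Category.assoc, NatTrans.naturality]
      _ = (vv d ≫ (Subobject.underlying.obj T).map gdd) ≫ T.arrow.app d' := by
          rw [Category.assoc]
  refine Subobject.le_of_comm
    { app := vv
      naturality := fun _ _ gdd => hnatv gdd } ?_
  ext d
  simpa using hvv d

end MfNoetherian

/-- Base change along a contravariantly finite functor `φ : C → D`: if `M[C(-,x)]` is
noetherian in `Fun(Cᵒᵖ, A)` for every `x ∈ C`, then `M[D(-,y)]` is noetherian in
`Fun(Dᵒᵖ, A)` for every `y ∈ D`. -/
theorem freeFunctor_noetherian_of_contravariantlyFinite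
    [Abelian A] [HasColimits A] [AB5 A] [HasSeparator A]
    (φ : C ⥤ D) (hφ : ContravariantlyFinite φ) (M : A)
    (h : ∀ x : C, _root_.IsNoetherianObject (freeFunctor M x)) :
    ∀ y : D, _root_.IsNoetherianObject (freeFunctor M y) := by
  intro y
  obtain ⟨n, xs, hl⟩ := hφ.2 y
  have hxs : ∀ i : Fin n, _root_.IsNoetherianObject (mf M (yoneda.obj (xs i))) := fun i => h (xs i)
  have hco : _root_.IsNoetherianObject (∐ fun i : Fin n => mf M (yoneda.obj (xs i))) :=
    isNoetherianObject_coprod n _ hxs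
  obtain ⟨c, hc⟩ := mf_coprod_epi M xs
  haveI := hc
  have h2 : _root_.IsNoetherianObject (mf M (∐ fun i : Fin n => yoneda.obj (xs i))) :=
    isNoetherianObject_of_epi c hco
  have h3 : _root_.IsNoetherianObject (mf M (φ.op ⋙ yoneda.obj y)) :=
    leadsto_isNoetherianObject hl h2
  exact isNoetherianObject_of_comp_op φ hφ.1 (freeFunctor M y) h3
end

section
/- Fix n ≥ 0 and let Γ(n) be the set of all functions f : {1,...,m} → {1,...,n} over all m ≥ 0, ordered by f ≤ g iff f = g∘h for some ordered surjection h. Then for every infinite sequence (f_r)_{r∈ℕ} in Γ(n) there exist indices i < j with f_j ≤ f_i (i.e., (Γ(n), ≤) is a well-quasi-order / strongly noetherian poset). -/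
/-- `minFib f i` is `min f⁻¹(i)` (as a natural number) for `f : Fin m → Fin n`. -/
noncomputable def minFib {m n : ℕ} (f : Fin m → Fin n) (i : Fin n) : ℕ :=
  sInf {a : ℕ | ∃ h : a < m, f ⟨a, h⟩ = i}

/-- A map `f : Fin m → Fin n` is an ordered surjection if it is surjective and
`i < j` implies `min f⁻¹(i) < min f⁻¹(j)`. -/
def IsOrderedSurj {m n : ℕ} (f : Fin m → Fin n) : Prop :=
  Function.Surjective f ∧ StrictMono fun i => minFib f i

/-- The order on `Γ(n) = ⨆ₘ Γ(m, n)`: `f ≤ g` iff `f = g ∘ h` for some ordered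
surjection `h`. -/
def leGamma {n : ℕ} (f g : Σ m : ℕ, Fin m → Fin n) : Prop :=
  ∃ h : Fin f.1 → Fin g.1, IsOrderedSurj h ∧ f.2 = g.2 ∘ h

namespace GammaWqo

variable {n : ℕ}

/-- `Emb s K L` : `K` is obtained from `L` by deleting letters each of which either lies in
`s` or equals some previously kept letter. -/
inductive Emb : Finset (Fin n) → List (Fin n) → List (Fin n) → Prop
  | nil (s) : Emb s [] []
  | keep {s x K L} : Emb (insert x s) K L → Emb s (x :: K) (x :: L)
  | drop {s x K L} : x ∈ s → Emb s K L → Emb s K (x :: L)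

theorem emb_exists_embedding {s : Finset (Fin n)} {K L : List (Fin n)}
    (h : Emb s K L) :
    ∃ e : ℕ → ℕ, StrictMono e ∧
      (∀ k < K.length, L[e k]? = K[k]?) ∧
      (∀ a < L.length, (∃ y ∈ s, L[a]? = some y) ∨
        ∃ k < K.length, e k ≤ a ∧ L[a]? = K[k]?) := by
  induction h with
  | nil s => exact ⟨id, strictMono_id, by simp, by simp⟩
  | @keep s x K L h ih =>
    obtain ⟨e, he, hm, hc⟩ := ih
    refine ⟨fun k => match k with | 0 => 0 | (k+1) => e k + 1, ?_, ?_, ?_⟩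
    · apply strictMono_nat_of_lt_succ
      intro k
      match k with
      | 0 => exact Nat.succ_pos _
      | (k+1) => exact Nat.succ_lt_succ (he (Nat.lt_succ_self k))
    · intro k hk
      match k with
      | 0 => simp
      | (k+1) =>
        simpa using hm k (by simpa using hk)
    · intro a ha
      match a with
      | 0 => exact Or.inr ⟨0, Nat.succ_pos _, le_refl _, by simp⟩
      | (a+1) =>
        rcases hc a (by simpa using ha) with ⟨y, hy, hLy⟩ | ⟨k, hk, hek, hLK⟩
        · rcases Finset.mem_insert.1 hy with rfl | hy
          · exact Or.inr ⟨0, Nat.succ_pos _, Nat.zero_le _, by simpa using hLy⟩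
          · exact Or.inl ⟨y, hy, by simpa using hLy⟩
        · exact Or.inr ⟨k + 1, by simpa using hk, Nat.succ_le_succ hek, by simpa using hLK⟩
  | @drop s x K L hx h ih =>
    obtain ⟨e, he, hm, hc⟩ := ih
    refine ⟨fun k => e k + 1, fun a b hab => Nat.succ_lt_succ (he hab), ?_, ?_⟩
    · intro k hk
      simpa using hm k hk
    · intro a ha
      match a with
      | 0 => exact Or.inl ⟨x, hx, by simp⟩
      | (a+1) =>
        rcases hc a (by simpa using ha) with ⟨y, hy, hLy⟩ | ⟨k, hk, hek, hLK⟩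
        · exact Or.inl ⟨y, hy, by simpa using hLy⟩
        · exact Or.inr ⟨k, hk, Nat.succ_le_succ hek, by simpa using hLK⟩


theorem leGamma_of_embedding {m m' : ℕ} (f : Fin m → Fin n) (g : Fin m' → Fin n)
    (e : ℕ → ℕ) (he : StrictMono e)
    (hmatch : ∀ k (hk : k < m'), ∃ hek : e k < m, f ⟨e k, hek⟩ = g ⟨k, hk⟩)
    (hcov : ∀ a : Fin m, ∃ k, ∃ hk : k < m', e k ≤ (a : ℕ) ∧ f a = g ⟨k, hk⟩) :
    leGamma ⟨m, f⟩ ⟨m', g⟩ := by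
  classical
  set G : ℕ → Option (Fin n) := fun k => if hk : k < m' then some (g ⟨k, hk⟩) else none with hG
  set P : Fin m → ℕ → Prop := fun a k => k < m' ∧ e k ≤ (a : ℕ) ∧ G k = some (f a) with hPdef
  have hP : ∀ a : Fin m, P a (Nat.findGreatest (P a) m') := by
    intro a
    obtain ⟨k, hk, h1, h2⟩ := hcov a
    exact Nat.findGreatest_spec hk.le ⟨hk, h1, by simp [hG, dif_pos hk, h2]⟩
  set h : Fin m → Fin m' := fun a => ⟨Nat.findGreatest (P a) m', (hP a).1⟩ with hh
  -- values
  have hval : ∀ a : Fin m, f a = g (h a) := by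
    intro a
    have h2 := (hP a).2.2
    have h3 : G (Nat.findGreatest (P a) m') = some (g (h a)) := by
      show (if hk : _ < m' then some (g ⟨_, hk⟩) else none) = _
      rw [dif_pos (hP a).1]
    rw [h3] at h2
    exact (Option.some_injective _ h2).symm
  -- h at the embedded positions
  have hfix : ∀ (k : ℕ) (hk : k < m') (hek : e k < m), h ⟨e k, hek⟩ = ⟨k, hk⟩ := by
    intro k hk hek
    obtain ⟨hek', hfe⟩ := hmatch k hk
    have hPk : P ⟨e k, hek⟩ k := ⟨hk, le_refl _, by simp [hG, dif_pos hk, hfe]⟩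
    have hge : k ≤ Nat.findGreatest (P ⟨e k, hek⟩) m' := Nat.le_findGreatest hk.le hPk
    have hle : Nat.findGreatest (P ⟨e k, hek⟩) m' ≤ k := by
      have := (hP ⟨e k, hek⟩).2.1
      exact he.le_iff_le.1 this
    exact Fin.ext (le_antisymm hle hge)
  -- minFib h = e
  have hmin : ∀ k : Fin m', minFib h k = e (k : ℕ) := by
    intro k
    obtain ⟨hek, -⟩ := hmatch (k : ℕ) k.2
    have hmem : e (k : ℕ) ∈ {a : ℕ | ∃ ha : a < m, h ⟨a, ha⟩ = k} :=
      ⟨hek, hfix _ k.2 hek⟩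
    refine le_antisymm (Nat.sInf_le hmem) (le_csInf ⟨_, hmem⟩ ?_)
    rintro b ⟨hb, hhb⟩
    have : P ⟨b, hb⟩ (Nat.findGreatest (P ⟨b, hb⟩) m') := hP ⟨b, hb⟩
    have hk' : Nat.findGreatest (P ⟨b, hb⟩) m' = (k : ℕ) := congrArg Fin.val hhb
    rw [hk'] at this
    exact this.2.1
  refine ⟨h, ⟨?_, ?_⟩, ?_⟩
  · intro k
    obtain ⟨hek, -⟩ := hmatch (k : ℕ) k.2
    exact ⟨⟨e (k : ℕ), hek⟩, hfix _ k.2 hek⟩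
  · intro k l hkl
    show minFib h k < minFib h l
    rw [hmin k, hmin l]
    exact he hkl
  · funext a
    exact hval a


/-- Parse a word into a prefix of already-seen letters and a list of
(new letter, following block) pairs. -/
def parse : Finset (Fin n) → List (Fin n) → List (Fin n) × List (Fin n × List (Fin n))
  | _, [] => ([], [])
  | s, x :: L =>
    if x ∈ s then ((x :: (parse s L).1), (parse s L).2)
    else ([], (x, (parse (insert x s) L).1) :: (parse (insert x s) L).2)

def build (p : List (Fin n × List (Fin n))) : List (Fin n) :=
  (p.map fun a => a.1 :: a.2).flatten

@[simp] theorem build_nil : build ([] : List (Fin n × List (Fin n))) = [] := rfl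

@[simp] theorem build_cons (x : Fin n) (u : List (Fin n)) (p) :
    build ((x, u) :: p) = x :: (u ++ build p) := by
  simp [build]

def SeenOK : Finset (Fin n) → List (Fin n × List (Fin n)) → Prop
  | _, [] => True
  | s, (x, u) :: p => (∀ y ∈ u, y ∈ insert x s) ∧ SeenOK (insert x s) p

theorem parse_reconstruct : ∀ (L : List (Fin n)) (s : Finset (Fin n)),
    L = (parse s L).1 ++ build (parse s L).2
  | [], s => rfl
  | x :: L, s => by
    by_cases hx : x ∈ s
    · simp only [parse, if_pos hx]
      simpa using parse_reconstruct L s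
    · simp only [parse, if_neg hx]
      simpa using parse_reconstruct L (insert x s)

theorem parse_seenOK : ∀ (L : List (Fin n)) (s : Finset (Fin n)),
    (∀ y ∈ (parse s L).1, y ∈ s) ∧ SeenOK s (parse s L).2
  | [], s => ⟨by simp [parse], trivial⟩
  | x :: L, s => by
    by_cases hx : x ∈ s
    · simp only [parse, if_pos hx]
      obtain ⟨h1, h2⟩ := parse_seenOK L s
      exact ⟨by simpa [hx] using h1, h2⟩
    · simp only [parse, if_neg hx]
      obtain ⟨h1, h2⟩ := parse_seenOK L (insert x s)
      exact ⟨by simp, ⟨h1, h2⟩⟩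

theorem parse_heads_nodup : ∀ (L : List (Fin n)) (s : Finset (Fin n)),
    ((parse s L).2.map Prod.fst).Nodup ∧ ∀ x ∈ (parse s L).2.map Prod.fst, x ∉ s
  | [], s => ⟨by simp [parse], by simp [parse]⟩
  | x :: L, s => by
    by_cases hx : x ∈ s
    · simp only [parse, if_pos hx]
      exact parse_heads_nodup L s
    · simp only [parse, if_neg hx]
      obtain ⟨h1, h2⟩ := parse_heads_nodup L (insert x s)
      refine ⟨List.nodup_cons.2 ⟨fun hmem => ?_, h1⟩, ?_⟩
      · exact h2 x hmem (Finset.mem_insert_self x s)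
      · intro y hy
        rcases List.mem_cons.1 hy with rfl | hy
        · exact hx
        · intro hys
          exact h2 y hy (Finset.mem_insert_of_mem hys)

theorem emb_append {s : Finset (Fin n)} {u v K L : List (Fin n)}
    (huv : List.Sublist u v) (hv : ∀ y ∈ v, y ∈ s) (h : Emb s K L) :
    Emb s (u ++ K) (v ++ L) := by
  induction huv with
  | slnil => exact h
  | cons a huv ih => exact Emb.drop (hv a List.mem_cons_self) (ih fun y hy => hv y (List.mem_cons_of_mem a hy))
  | cons_cons a huv ih =>
    have ha : a ∈ s := hv a List.mem_cons_self
    have h2 := ih (fun y hy => hv y (List.mem_cons_of_mem a hy))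
    rw [← Finset.insert_eq_self.2 ha] at h2
    simpa using Emb.keep h2

theorem emb_build {p q : List (Fin n × List (Fin n))}
    (hpq : List.Forall₂ (fun a b => a.1 = b.1 ∧ List.Sublist a.2 b.2) p q) :
    ∀ s : Finset (Fin n), SeenOK s q → Emb s (build p) (build q) := by
  induction hpq with
  | nil => exact fun s _ => Emb.nil s
  | @cons a b p' q' hab hpq ih =>
    obtain ⟨x, u⟩ := a
    obtain ⟨y, v⟩ := b
    obtain ⟨hxy, huv⟩ := hab
    dsimp at hxy
    subst hxy
    intro s hq
    obtain ⟨hv, hq'⟩ := hq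
    rw [build_cons, build_cons]
    exact Emb.keep (emb_append huv hv (ih _ hq'))


theorem leGamma_of_emb {m m' : ℕ} {f : Fin m → Fin n} {g : Fin m' → Fin n}
    (h : Emb (∅ : Finset (Fin n)) (List.ofFn g) (List.ofFn f)) :
    leGamma ⟨m, f⟩ ⟨m', g⟩ := by
  obtain ⟨e, he, hm, hc⟩ := emb_exists_embedding h
  apply leGamma_of_embedding f g e he
  · intro k hk
    have h1 := hm k (by simpa using hk)
    rw [List.getElem?_ofFn, List.getElem?_ofFn,
      dif_pos hk] at h1
    rcases Nat.lt_or_ge (e k) m with hek | hek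
    · rw [dif_pos hek] at h1
      exact ⟨hek, Option.some_injective _ h1⟩
    · rw [dif_neg (Nat.not_lt.2 hek)] at h1
      simp at h1
  · intro a
    rcases hc (a : ℕ) (by simp [a.2]) with ⟨y, hy, -⟩ | ⟨k, hk, hek, hLK⟩
    · simp at hy
    · have hk' : k < m' := by simpa using hk
      rw [List.getElem?_ofFn, List.getElem?_ofFn,
        dif_pos a.2, dif_pos hk'] at hLK
      refine ⟨k, hk', hek, ?_⟩
      have := Option.some_injective _ hLK
      simpa using this


end GammaWqo

open GammaWqo

/-- Higman-type lemma: `(Γ(n), ≤)` is strongly noetherian (a well-quasi-order): every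
infinite sequence `(f_r)` in `Γ(n)` has indices `i < j` with `f_j ≤ f_i`. -/
theorem gamma_wqo (n : ℕ) (f : ℕ → Σ m : ℕ, Fin m → Fin n) :
    ∃ i j, i < j ∧ leGamma (f j) (f i) := by
  classical
  set L : ℕ → List (Fin n) := fun r => List.ofFn (f r).2 with hLdef
  set q : ℕ → List (Fin n × List (Fin n)) := fun r => (parse ∅ (L r)).2 with hqdef
  have hL : ∀ r, L r = build (q r) := by
    intro r
    have h1 := parse_reconstruct (L r) ∅
    have h2 : (parse ∅ (L r)).1 = [] := by
      have h3 := (parse_seenOK (L r) ∅).1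
      cases h : (parse ∅ (L r)).1 with
      | nil => rfl
      | cons a l => exact absurd (h3 a (h ▸ List.mem_cons_self (a := a) (l := l))) (by simp)
    rw [h2] at h1
    simpa using h1
  -- pigeonhole on the word of first occurrences
  have hlen : ∀ r, ((q r).map Prod.fst).length ≤ n := fun r =>
    le_trans (List.Nodup.length_le_card (parse_heads_nodup (L r) ∅).1) (by simp)
  haveI : Finite ↥{l : List (Fin n) | l.length ≤ n} :=
    (List.finite_length_le (Fin n) n).to_subtype
  set W : ℕ → ↥{l : List (Fin n) | l.length ≤ n} :=
    fun r => ⟨(q r).map Prod.fst, hlen r⟩ with hWdef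
  obtain ⟨b, hb⟩ := Finite.exists_infinite_fiber W
  have hS : {r | W r = b}.Infinite := by
    rw [← Set.infinite_coe_iff]
    exact hb
  set N : ℕ → ℕ := Nat.nth (fun r => W r = b) with hNdef
  have hNmono : StrictMono N := Nat.nth_strictMono hS
  have hNmem : ∀ k, W (N k) = b := fun k => Nat.nth_mem_of_infinite hS k
  -- Higman's lemma
  have h1 : (Set.univ : Set (Fin n)).PartiallyWellOrderedOn (· = ·) :=
    Set.finite_univ.partiallyWellOrderedOn
  have h2 : (Set.univ : Set (List (Fin n))).PartiallyWellOrderedOn List.Sublist := by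
    have h3 := Set.PartiallyWellOrderedOn.partiallyWellOrderedOn_sublistForall₂
      (α := Fin n) (· = ·) h1
    rw [Set.partiallyWellOrderedOn_iff_exists_lt]
    intro g hg
    obtain ⟨i, j, hij, hrel⟩ := h3.exists_lt (f := g) (fun r => by simp)
    obtain ⟨l, hforall, hsub⟩ := List.sublistForall₂_iff.1 hrel
    rw [List.forall₂_eq_eq_eq] at hforall
    exact ⟨i, j, hij, hforall ▸ hsub⟩
  set R : (Fin n × List (Fin n)) → (Fin n × List (Fin n)) → Prop :=
    fun a b => a.1 = b.1 ∧ List.Sublist a.2 b.2 with hRdef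
  haveI : IsRefl (Fin n × List (Fin n)) R := ⟨fun a => ⟨rfl, List.Sublist.refl _⟩⟩
  haveI : IsTrans (Fin n × List (Fin n)) R :=
    ⟨fun a b c hab hbc => ⟨hab.1.trans hbc.1, hab.2.trans hbc.2⟩⟩
  have hprod : (Set.univ : Set (Fin n × List (Fin n))).PartiallyWellOrderedOn R := by
    have := h1.prod h2
    rwa [Set.univ_prod_univ] at this
  haveI : IsPreorder (Fin n × List (Fin n)) R := {}
  have hH := Set.PartiallyWellOrderedOn.partiallyWellOrderedOn_sublistForall₂ R hprod
  obtain ⟨i, j, hij, hrel⟩ := hH.exists_lt (f := fun k => q (N k)) (fun k => by simp)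
  -- equal head words force equal lengths, hence Forall₂
  have hw : (q (N i)).map Prod.fst = (q (N j)).map Prod.fst :=
    congrArg Subtype.val ((hNmem i).trans (hNmem j).symm)
  have hlen2 : (q (N i)).length = (q (N j)).length := by
    have := congrArg List.length hw
    simpa using this
  obtain ⟨l, hforall, hsub⟩ := List.sublistForall₂_iff.1 hrel
  have hleq : l = q (N j) := by
    apply hsub.eq_of_length
    rw [← hforall.length_eq, hlen2]
  subst hleq
  have hemb : Emb ∅ (L (N i)) (L (N j)) := by
    rw [hL (N i), hL (N j)]
    exact emb_build hforall ∅ (parse_seenOK (L (N j)) ∅).2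
  exact ⟨N i, N j, hNmono hij, leGamma_of_emb hemb⟩
end
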